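/- Let w : (0,1] × S^{N-1} → ℝ be C¹, g(r,θ) := ∂_r w(r,θ) - (γ/r) w(r,θ), and suppose ∫₀¹ (2/r^{2γ-1}) ∫_{S^{N-1}} g²(r,θ) dθ dr ≤ C₂ < ∞ for some γ > 0. Then for every r ∈ (0,1), ∫_{S^{N-1}} w²(r,θ) dθ / r^{2γ} ≤ 2 ∫_{S^{N-1}} w²(1,θ) dθ + 2|log r| · C₂. -/

import Mathlib

open MeasureTheory Metric Set NNReal ENNReal intervalIntegral

lemma coord_le_norm {m : ℕ} (y : EuclideanSpace ℝ (Fin m)) (i : Fin m) : |y i| ≤ ‖y‖ := by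
  rw [EuclideanSpace.norm_eq]
  rw [show |y i| = Real.sqrt (‖y i‖^2) by rw [Real.sqrt_sq_eq_abs]; simp]
  apply Real.sqrt_le_sqrt
  exact Finset.single_le_sum (f := fun j => ‖y j‖^2) (fun j _ => sq_nonneg _) (Finset.mem_univ i)

lemma sphere_hausdorff_lt_top (N : ℕ) (hN : 1 ≤ N) :
    μH[(N : ℝ) - 1] (sphere (0 : EuclideanSpace ℝ (Fin N)) 1) < ⊤ := by
  obtain ⟨n, rfl⟩ : ∃ n, N = n + 1 := ⟨N - 1, (Nat.succ_pred_eq_of_pos hN).symm⟩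
  set E := EuclideanSpace ℝ (Fin (n + 1))
  have hd : ((n + 1 : ℕ) : ℝ) - 1 = (n : ℝ) := by push_cast; ring
  rw [hd]
  have hdnn : (0 : ℝ) ≤ (n : ℝ) := Nat.cast_nonneg n
  set c : ℝ := 1 / Real.sqrt (n + 1) with hc_def
  have hsq : Real.sqrt (n+1) > 0 := Real.sqrt_pos.2 (by positivity)
  have hc : 0 < c := by positivity
  set nrm : E → E := fun y => ‖y‖⁻¹ • y with hnrm_def
  set S : Fin (n + 1) → Set E := fun i => {y : E | y i = c ∧ ‖y‖ ≤ 1} with hS_def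
  -- each S i has finite measure
  have hSfin : ∀ i, μH[(n : ℝ)] (S i) < ⊤ := by
    intro i
    set φ : (Fin n → ℝ) → E := fun v => WithLp.toLp 2 (i.insertNth c v : Fin (n+1) → ℝ) with hφ
    have hφ_lip : LipschitzWith (n + 1 : ℝ≥0) φ := by
      apply LipschitzWith.of_dist_le_mul
      intro v u
      have key : dist (φ v) (φ u) ≤ (n + 1 : ℝ) * dist v u := by
        rw [EuclideanSpace.dist_eq]
        have h1 : ∀ j : Fin (n+1), dist (φ v j) (φ u j) ^2 ≤ (dist v u)^2 := by
          intro j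
          by_cases hj : j = i
          · subst hj
            simp only [φ, PiLp.toLp_apply, Fin.insertNth_apply_same]
            simpa using sq_nonneg (dist v u)
          · obtain ⟨j', rfl⟩ := Fin.exists_succAbove_eq hj
            simp only [φ, PiLp.toLp_apply, Fin.insertNth_apply_succAbove]
            exact pow_le_pow_left₀ dist_nonneg (dist_le_pi_dist v u j') 2
        calc Real.sqrt (∑ j, dist (φ v j) (φ u j)^2)
            ≤ Real.sqrt (∑ _j : Fin (n+1), (dist v u)^2) :=
              Real.sqrt_le_sqrt (Finset.sum_le_sum fun j _ => h1 j)
          _ = Real.sqrt ((n+1 : ℝ) * (dist v u)^2) := by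
              rw [Finset.sum_const, Finset.card_univ, Fintype.card_fin, nsmul_eq_mul]
              push_cast; ring_nf
          _ ≤ (n + 1 : ℝ) * dist v u := by
              rw [Real.sqrt_mul (by positivity), Real.sqrt_sq dist_nonneg]
              have h3 : Real.sqrt ((n:ℝ)+1) ≤ (n+1 : ℝ) := by
                have h4 := Real.sqrt_le_sqrt (show ((n:ℝ)+1) ≤ ((n:ℝ)+1)^2 by nlinarith)
                rwa [Real.sqrt_sq (by positivity)] at h4
              exact mul_le_mul_of_nonneg_right h3 dist_nonneg
      have hcast : ((n + 1 : ℝ≥0) : ℝ) = (n + 1 : ℝ) := by push_cast; ring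
      rw [hcast]; exact key
    have hsub : S i ⊆ φ '' (closedBall 0 1) := by
      intro y hy
      obtain ⟨hyi, hyn⟩ := hy
      refine ⟨i.removeNth y, ?_, ?_⟩
      · rw [mem_closedBall, dist_zero_right]
        rw [pi_norm_le_iff_of_nonneg (by norm_num)]
        intro j
        calc ‖i.removeNth y j‖ = |y (i.succAbove j)| := rfl
          _ ≤ ‖y‖ := coord_le_norm y _
          _ ≤ 1 := hyn
      · rw [hφ]
        simp only
        rw [← hyi]
        exact congrArg (WithLp.toLp 2) (Fin.insertNth_self_removeNth i y)
    calc μH[(n:ℝ)] (S i) ≤ μH[(n:ℝ)] (φ '' (closedBall 0 1)) := measure_mono hsub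
      _ ≤ (n+1 : ℝ≥0) ^ (n : ℝ) * μH[(n:ℝ)] (closedBall (0 : Fin n → ℝ) 1) :=
          hφ_lip.hausdorffMeasure_image_le hdnn _
      _ < ⊤ := by
          have h5 : (μH[(n:ℝ)] : Measure (Fin n → ℝ)) (closedBall 0 1)
              = volume (closedBall (0 : Fin n → ℝ) 1) := by
            have h4 := MeasureTheory.hausdorffMeasure_pi_real (ι := Fin n)
            rw [Fintype.card_fin] at h4
            rw [h4]
          rw [h5]
          exact ENNReal.mul_lt_top
            (ENNReal.rpow_lt_top_of_nonneg hdnn ENNReal.coe_ne_top)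
            (isCompact_closedBall 0 1).measure_lt_top
  -- nrm is Lipschitz on each S i
  have hnrm_lip : ∀ i, LipschitzOnWith (2 / c).toNNReal nrm (S i) := by
    intro i
    apply LipschitzOnWith.of_dist_le_mul
    intro y hy z hz
    have hyc : c ≤ ‖y‖ := le_trans (le_abs_self c) (by rw [← hy.1]; exact coord_le_norm y i)
    have hzc : c ≤ ‖z‖ := le_trans (le_abs_self c) (by rw [← hz.1]; exact coord_le_norm z i)
    have hy0 : 0 < ‖y‖ := lt_of_lt_of_le hc hyc
    have hz0 : 0 < ‖z‖ := lt_of_lt_of_le hc hzc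
    have h7 : |‖z‖ - ‖y‖| ≤ ‖y - z‖ := by
      rw [norm_sub_rev]
      exact abs_norm_sub_norm_le z y
    have expand : nrm y - nrm z = ‖y‖⁻¹ • (y - z) + (‖y‖⁻¹ - ‖z‖⁻¹) • z := by
      simp only [hnrm_def, smul_sub, sub_smul]
      abel
    rw [dist_eq_norm, expand]
    have t1 : ‖‖y‖⁻¹ • (y - z)‖ ≤ c⁻¹ * ‖y - z‖ := by
      rw [norm_smul, norm_inv, norm_norm]
      apply mul_le_mul_of_nonneg_right _ (norm_nonneg _)
      exact inv_anti₀ hc hyc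
    have t2 : ‖(‖y‖⁻¹ - ‖z‖⁻¹) • z‖ ≤ c⁻¹ * ‖y - z‖ := by
      rw [norm_smul, Real.norm_eq_abs]
      have e1 : ‖y‖⁻¹ - ‖z‖⁻¹ = (‖z‖ - ‖y‖) / (‖y‖ * ‖z‖) := by
        field_simp
      rw [e1, abs_div, abs_of_pos (mul_pos hy0 hz0)]
      calc |‖z‖ - ‖y‖| / (‖y‖ * ‖z‖) * ‖z‖ = |‖z‖ - ‖y‖| / ‖y‖ := by
            field_simp
          _ ≤ ‖y - z‖ / c := by gcongr
          _ = c⁻¹ * ‖y - z‖ := by ring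
    calc ‖‖y‖⁻¹ • (y - z) + (‖y‖⁻¹ - ‖z‖⁻¹) • z‖
        ≤ ‖‖y‖⁻¹ • (y - z)‖ + ‖(‖y‖⁻¹ - ‖z‖⁻¹) • z‖ := norm_add_le _ _
      _ ≤ c⁻¹ * ‖y - z‖ + c⁻¹ * ‖y - z‖ := add_le_add t1 t2
      _ = (2 / c) * ‖y - z‖ := by ring
      _ = ((2 / c).toNNReal : ℝ) * dist y z := by
          rw [Real.coe_toNNReal _ (by positivity), dist_eq_norm]
  -- the covering
  have main : ∀ (j : Fin (n+1)) (x : E), ‖x‖ = 1 → c ≤ x j → x ∈ nrm '' S j := by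
    intro j x hxn hxj
    have hxj0 : 0 < x j := lt_of_lt_of_le hc hxj
    have hcd : 0 < c / x j := div_pos hc hxj0
    refine ⟨(c / x j) • x, ⟨?_, ?_⟩, ?_⟩
    · show (c / x j) * (x j) = c
      field_simp
    · rw [norm_smul, hxn, mul_one, Real.norm_eq_abs, abs_of_pos hcd, div_le_one hxj0]
      exact hxj
    · simp only [hnrm_def]
      rw [norm_smul, hxn, mul_one, Real.norm_eq_abs, abs_of_pos hcd, smul_smul,
        inv_mul_cancel₀ hcd.ne', one_smul]
  have hcover : sphere (0 : E) 1 ⊆ (⋃ i, nrm '' S i) ∪ (Neg.neg '' ⋃ i, nrm '' S i) := by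
    intro x hx
    have hxn : ‖x‖ = 1 := by simpa using hx
    have hsum : ∑ j, (x j)^2 = 1 := by
      have h6 : Real.sqrt (∑ j, ‖x j‖^2) = 1 := by rw [← EuclideanSpace.norm_eq, hxn]
      have h8 := congrArg (· ^ 2) h6
      simp only [one_pow] at h8
      rw [Real.sq_sqrt (Finset.sum_nonneg fun j _ => sq_nonneg _)] at h8
      simpa [sq_abs] using h8
    have hex : ∃ j, c ≤ |x j| := by
      by_contra hcon
      push_neg at hcon
      have hlt : ∑ j, (x j)^2 < ∑ _j : Fin (n+1), c^2 := by
        apply Finset.sum_lt_sum_of_nonempty ⟨⟨0, by omega⟩, Finset.mem_univ _⟩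
        intro j _
        have := hcon j
        calc (x j)^2 = |x j|^2 := (sq_abs _).symm
          _ < c^2 := by nlinarith [abs_nonneg (x j)]
      rw [hsum, Finset.sum_const, Finset.card_univ, Fintype.card_fin, nsmul_eq_mul] at hlt
      push_cast at hlt
      have hcsq : c^2 = 1/(n+1) := by
        rw [hc_def, div_pow, one_pow, Real.sq_sqrt (by positivity)]
      rw [hcsq, mul_one_div, div_self (by positivity : ((n:ℝ)+1) ≠ 0)] at hlt
      exact lt_irrefl _ hlt
    obtain ⟨j, hj⟩ := hex
    rcases le_or_gt c (x j) with h | h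
    · left
      exact mem_iUnion.2 ⟨j, main j x hxn h⟩
    · right
      have hxneg : x j < 0 := by
        rcases abs_cases (x j) with ⟨he, _⟩ | ⟨_, hneg⟩
        · rw [he] at hj; linarith
        · linarith
      have hneg : c ≤ (-x) j := by
        have : |x j| = -(x j) := abs_of_neg hxneg
        have : c ≤ -(x j) := this ▸ hj
        exact this
      have hnx : ‖(-x : E)‖ = 1 := by rw [norm_neg, hxn]
      exact ⟨-x, mem_iUnion.2 ⟨j, main j (-x) hnx hneg⟩, neg_neg x⟩
  -- assemble
  have hpiece : ∀ i, μH[(n : ℝ)] (nrm '' S i) < ⊤ := by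
    intro i
    calc μH[(n:ℝ)] (nrm '' S i) ≤ (2/c).toNNReal ^ (n : ℝ) * μH[(n:ℝ)] (S i) :=
          (hnrm_lip i).hausdorffMeasure_image_le hdnn
      _ < ⊤ := ENNReal.mul_lt_top
          (ENNReal.rpow_lt_top_of_nonneg hdnn ENNReal.coe_ne_top) (hSfin i)
  have hU : μH[(n : ℝ)] (⋃ i, nrm '' S i) < ⊤ := by
    apply lt_of_le_of_lt (measure_iUnion_le _)
    rw [tsum_fintype]
    exact ENNReal.sum_lt_top.mpr fun i _ => hpiece i
  have hnegU : μH[(n : ℝ)] (Neg.neg '' ⋃ i, nrm '' S i) = μH[(n : ℝ)] (⋃ i, nrm '' S i) :=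
    Isometry.hausdorffMeasure_image isometry_neg (Or.inl hdnn) _
  calc μH[(n:ℝ)] (sphere (0:E) 1)
      ≤ μH[(n:ℝ)] ((⋃ i, nrm '' S i) ∪ (Neg.neg '' ⋃ i, nrm '' S i)) := measure_mono hcover
    _ ≤ μH[(n:ℝ)] (⋃ i, nrm '' S i) + μH[(n:ℝ)] (Neg.neg '' ⋃ i, nrm '' S i) := measure_union_le _ _
    _ < ⊤ := by rw [hnegU]; exact ENNReal.add_lt_top.mpr ⟨hU, hU⟩


lemma cs_step {r : ℝ} (hr0 : 0 < r) (hr1 : r < 1) {u : ℝ → ℝ} (γ : ℝ)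
    (hu : ContinuousOn u (Icc r 1)) :
    (∫ s in r..1, u s * s ^ (-γ))^2 ≤
      |Real.log r| * ∫ s in r..1, (u s)^2 * s ^ (1 - 2*γ) := by
  have hsub : Ioc r 1 ⊆ Icc r 1 := Ioc_subset_Icc_self
  have hpos : ∀ s ∈ Ioc r 1, 0 < s := fun s hs => lt_trans hr0 hs.1
  set ν₀ := volume.restrict (Ioc r 1) with hν₀
  haveI : IsFiniteMeasure ν₀ := by
    constructor
    rw [hν₀, Measure.restrict_apply_univ, Real.volume_Ioc]
    exact ENNReal.ofReal_lt_top
  set f : ℝ → ℝ := fun s => s ^ (-(2⁻¹ : ℝ)) with hf_def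
  set h : ℝ → ℝ := fun s => |u s| * s ^ (2⁻¹ - γ) with hh_def
  have hrpow : ∀ e : ℝ, ContinuousOn (fun s : ℝ => s ^ e) (Icc r 1) := by
    intro e
    apply ContinuousOn.rpow_const continuousOn_id
    intro s hs
    exact Or.inl (ne_of_gt (lt_of_lt_of_le hr0 hs.1))
  have hf_cont : ContinuousOn f (Icc r 1) := hrpow _
  have hh_cont : ContinuousOn h (Icc r 1) := hu.abs.mul (hrpow _)
  have hf_meas : AEStronglyMeasurable f ν₀ :=
    (hf_cont.mono hsub).aestronglyMeasurable measurableSet_Ioc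
  have hh_meas : AEStronglyMeasurable h ν₀ :=
    (hh_cont.mono hsub).aestronglyMeasurable measurableSet_Ioc
  have hmem : ∀ (φ : ℝ → ℝ), ContinuousOn φ (Icc r 1) → AEStronglyMeasurable φ ν₀ →
      MemLp φ (ENNReal.ofReal 2) ν₀ := by
    intro φ hφc hφm
    obtain ⟨M, hM⟩ := isCompact_Icc.exists_bound_of_continuousOn hφc
    refine MemLp.of_bound hφm M ?_
    rw [hν₀, ae_restrict_iff' measurableSet_Ioc]
    exact ae_of_all _ fun s hs => hM s (hsub hs)
  have hconj : Real.HolderConjugate 2 2 := by rw [Real.holderConjugate_iff]; norm_num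
  have holder := integral_mul_le_Lp_mul_Lq_of_nonneg (μ := ν₀) hconj
    (f := f) (g := h)
    ((ae_restrict_iff' measurableSet_Ioc).2
      (ae_of_all _ fun s hs => Real.rpow_nonneg (hpos s hs).le _))
    ((ae_restrict_iff' measurableSet_Ioc).2
      (ae_of_all _ fun s hs =>
        mul_nonneg (abs_nonneg _) (Real.rpow_nonneg (hpos s hs).le _)))
    (hmem f hf_cont hf_meas) (hmem h hh_cont hh_meas)
  have hlog : (0:ℝ) < |Real.log r| := by
    rw [abs_of_neg (Real.log_neg hr0 hr1)]
    linarith [Real.log_neg hr0 hr1]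
  -- identify ∫ f^2
  have hA : ∫ s, f s ^ (2:ℝ) ∂ν₀ = |Real.log r| := by
    have e1 : ∫ s, f s ^ (2:ℝ) ∂ν₀ = ∫ s in Ioc r 1, s⁻¹ := by
      apply setIntegral_congr_fun measurableSet_Ioc
      intro s hs
      have hs0 : (0:ℝ) < s := hpos s hs
      simp only [hf_def]
      rw [← Real.rpow_mul hs0.le]
      norm_num [Real.rpow_neg_one]
    have e2 : (0:ℝ) ∉ Set.uIcc r 1 := by
      rw [Set.uIcc_of_le hr1.le]
      intro hmem0
      exact (lt_irrefl (0:ℝ) (lt_of_lt_of_le hr0 hmem0.1)).elim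
    rw [e1, ← intervalIntegral.integral_of_le hr1.le, integral_inv e2]
    rw [abs_of_neg (Real.log_neg hr0 hr1)]
    rw [one_div, Real.log_inv]
  -- identify ∫ h^2
  set B := ∫ s in r..1, (u s)^2 * s ^ (1 - 2*γ) with hB_def
  have hB_nonneg : 0 ≤ B := by
    apply intervalIntegral.integral_nonneg hr1.le
    intro s hs
    exact mul_nonneg (sq_nonneg _) (Real.rpow_nonneg (lt_of_lt_of_le hr0 hs.1).le _)
  have hB : ∫ s, h s ^ (2:ℝ) ∂ν₀ = B := by
    rw [hB_def, intervalIntegral.integral_of_le hr1.le]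
    apply setIntegral_congr_fun measurableSet_Ioc
    intro s hs
    have hs0 : (0:ℝ) < s := hpos s hs
    simp only [hh_def]
    rw [Real.mul_rpow (abs_nonneg _) (Real.rpow_nonneg hs0.le _)]
    rw [← Real.rpow_mul hs0.le, Real.rpow_two, sq_abs,
      show (2⁻¹ - γ)*2 = 1 - 2*γ by ring]
  -- step 1 : |∫ u s * s^{-γ}| ≤ ∫ f * h
  have step1 : |∫ s in r..1, u s * s ^ (-γ)| ≤ ∫ s, f s * h s ∂ν₀ := by
    rw [intervalIntegral.integral_of_le hr1.le]
    rw [← Real.norm_eq_abs]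
    refine le_trans (MeasureTheory.norm_integral_le_integral_norm _) ?_
    apply le_of_eq
    apply setIntegral_congr_fun measurableSet_Ioc
    intro s hs
    have hs0 : (0:ℝ) < s := hpos s hs
    show ‖u s * s ^ (-γ)‖ = f s * h s
    rw [Real.norm_eq_abs, abs_mul, abs_of_nonneg (Real.rpow_nonneg hs0.le _)]
    simp only [hf_def, hh_def]
    rw [show |u s| * s ^ (2⁻¹ - γ) = s ^ (2⁻¹ - γ) * |u s| by ring, ← mul_assoc,
      ← Real.rpow_add hs0]
    ring_nf
  -- combine
  have comb : |∫ s in r..1, u s * s ^ (-γ)| ≤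
      (|Real.log r|) ^ ((2:ℝ)⁻¹) * B ^ ((2:ℝ)⁻¹) := by
    refine le_trans step1 (le_trans holder ?_)
    rw [hA, hB]
    norm_num
  calc (∫ s in r..1, u s * s ^ (-γ))^2 = |∫ s in r..1, u s * s ^ (-γ)|^2 := (sq_abs _).symm
    _ ≤ ((|Real.log r|) ^ ((2:ℝ)⁻¹) * B ^ ((2:ℝ)⁻¹))^2 := by
        apply pow_le_pow_left₀ (abs_nonneg _) comb
    _ = |Real.log r| * B := by
        rw [mul_pow, ← Real.rpow_natCast (|Real.log r| ^ ((2:ℝ)⁻¹)) 2,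
          ← Real.rpow_natCast (B ^ ((2:ℝ)⁻¹)) 2,
          ← Real.rpow_mul (abs_nonneg _), ← Real.rpow_mul hB_nonneg]
        norm_num

/-- Let `w : (0,1] × S^{N-1} → ℝ` be `C¹`, and
`g(r,θ) = ∂_r w(r,θ) - (γ/r) w(r,θ)`. If
`∫₀¹ (2/r^{2γ-1}) ∫_{S^{N-1}} g² dθ dr ≤ C₂ < ∞`, then for every `r ∈ (0,1)`,
`(∫_{S^{N-1}} w²(r,θ) dθ)/r^{2γ} ≤ 2 ∫_{S^{N-1}} w²(1,θ) dθ + 2|log r| C₂`. -/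
theorem weighted_sphere_growth (N : ℕ) (hN : 2 ≤ N) (γ C₂ : ℝ) (hγ : 0 < γ)
    (w : ℝ → EuclideanSpace ℝ (Fin N) → ℝ)
    (hw : ContDiff ℝ 1 (fun p : ℝ × EuclideanSpace ℝ (Fin N) => w p.1 p.2))
    (g : ℝ → EuclideanSpace ℝ (Fin N) → ℝ)
    (hg : ∀ r, ∀ θ, g r θ = deriv (fun s => w s θ) r - (γ / r) * w r θ)
    (hint : IntegrableOn
      (fun r : ℝ => (2 / r ^ (2 * γ - 1)) *
        ∫ θ in sphere (0 : EuclideanSpace ℝ (Fin N)) 1, (g r θ) ^ 2 ∂(μH[(N : ℝ) - 1]))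
      (Ioo (0 : ℝ) 1))
    (hbound : (∫ r in Ioo (0 : ℝ) 1, (2 / r ^ (2 * γ - 1)) *
        ∫ θ in sphere (0 : EuclideanSpace ℝ (Fin N)) 1, (g r θ) ^ 2 ∂(μH[(N : ℝ) - 1]))
      ≤ C₂) :
    ∀ r ∈ Ioo (0 : ℝ) 1,
      (∫ θ in sphere (0 : EuclideanSpace ℝ (Fin N)) 1, (w r θ) ^ 2 ∂(μH[(N : ℝ) - 1]))
          / r ^ (2 * γ) ≤
        2 * (∫ θ in sphere (0 : EuclideanSpace ℝ (Fin N)) 1,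
              (w 1 θ) ^ 2 ∂(μH[(N : ℝ) - 1])) +
        2 * |Real.log r| * C₂ := by
  intro r hr
  obtain ⟨hr0, hr1⟩ := hr
  have hlog0 : 0 ≤ |Real.log r| := abs_nonneg _
  set Sph : Set (EuclideanSpace ℝ (Fin N)) := sphere (0 : EuclideanSpace ℝ (Fin N)) 1 with hSph
  set μ : Measure (EuclideanSpace ℝ (Fin N)) := μH[(N : ℝ) - 1] with hμ
  haveI hfin : IsFiniteMeasure (μ.restrict Sph) := by
    constructor
    rw [Measure.restrict_apply_univ]
    exact sphere_hausdorff_lt_top N (by omega)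
  haveI hfin0 : IsFiniteMeasure (volume.restrict (Ioc r 1)) := by
    constructor
    rw [Measure.restrict_apply_univ, Real.volume_Ioc]
    exact ENNReal.ofReal_lt_top
  -- basic facts about C₂
  have hC₂0 : 0 ≤ C₂ := by
    refine le_trans (setIntegral_nonneg measurableSet_Ioo fun s hs => ?_) hbound
    exact mul_nonneg (div_nonneg (by norm_num) (Real.rpow_nonneg hs.1.le _))
      (integral_nonneg fun θ => sq_nonneg _)
  -- derivative framework
  set W : ℝ × EuclideanSpace ℝ (Fin N) → ℝ := fun p => w p.1 p.2 with hW
  have hWc : Continuous W := hw.continuous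
  have hWd : Differentiable ℝ W := hw.differentiable one_ne_zero
  set d1 : ℝ → EuclideanSpace ℝ (Fin N) → ℝ := fun s θ => fderiv ℝ W (s, θ) (1, 0) with hd1
  have hder : ∀ s θ, HasDerivAt (fun t => w t θ) (d1 s θ) s := by
    intro s θ
    have h1 := (hWd (s, θ)).hasFDerivAt
    have h2 : HasDerivAt (fun t : ℝ => ((t, θ) : ℝ × EuclideanSpace ℝ (Fin N))) ((1:ℝ), (0:EuclideanSpace ℝ (Fin N))) s :=
      (hasDerivAt_id s).prodMk (hasDerivAt_const s θ)
    exact h1.comp_hasDerivAt s h2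
  have hd1c : Continuous (fun p : ℝ × EuclideanSpace ℝ (Fin N) => d1 p.1 p.2) := by
    have h3 := hw.continuous_fderiv one_ne_zero
    exact h3.clm_apply continuous_const
  have hgd : ∀ s θ, g s θ = d1 s θ - (γ / s) * w s θ := by
    intro s θ
    rw [hg s θ, (hder s θ).deriv]
  have hG_contOn : ContinuousOn (fun p : ℝ × EuclideanSpace ℝ (Fin N) => g p.1 p.2) {p : ℝ × EuclideanSpace ℝ (Fin N) | p.1 ≠ 0} := by
    have heq : ∀ p : ℝ × EuclideanSpace ℝ (Fin N), g p.1 p.2 = d1 p.1 p.2 - (γ / p.1) * W p := fun p => hgd p.1 p.2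
    apply ContinuousOn.congr (f := fun p : ℝ × EuclideanSpace ℝ (Fin N) => d1 p.1 p.2 - (γ / p.1) * W p)
    · apply ContinuousOn.sub hd1c.continuousOn
      apply ContinuousOn.mul _ hWc.continuousOn
      exact continuousOn_const.div continuous_fst.continuousOn fun p hp => hp
    · intro p _
      exact heq p
  -- continuity of s ↦ g s θ on Icc r 1
  have hg_contOn : ∀ θ, ContinuousOn (fun s : ℝ => g s θ) (Icc r 1) := by
    intro θ
    have hmap : MapsTo (fun s : ℝ => ((s, θ) : ℝ × EuclideanSpace ℝ (Fin N))) (Icc r 1) {p : ℝ × EuclideanSpace ℝ (Fin N) | p.1 ≠ 0} :=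
      fun s hs => ne_of_gt (lt_of_lt_of_le hr0 hs.1)
    exact hG_contOn.comp ((continuous_id.prodMk continuous_const).continuousOn) hmap
  have hrpowC : ∀ e : ℝ, ContinuousOn (fun s : ℝ => s ^ e) (Icc r 1) := by
    intro e
    apply ContinuousOn.rpow_const continuousOn_id
    intro s hs
    exact Or.inl (ne_of_gt (lt_of_lt_of_le hr0 hs.1))
  -- FTC
  have hFTC : ∀ θ, w r θ * r ^ (-γ) = w 1 θ - ∫ s in r..1, g s θ * s ^ (-γ) := by
    intro θ
    have hderiv : ∀ s ∈ Set.uIcc r 1,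
        HasDerivAt (fun t => w t θ * t ^ (-γ)) (g s θ * s ^ (-γ)) s := by
      intro s hs
      rw [Set.uIcc_of_le hr1.le] at hs
      have hs0 : (0:ℝ) < s := lt_of_lt_of_le hr0 hs.1
      have h1 : HasDerivAt (fun t : ℝ => t ^ (-γ)) (-γ * s ^ (-γ - 1)) s :=
        Real.hasDerivAt_rpow_const (Or.inl hs0.ne')
      have h2 := (hder s θ).mul h1
      refine h2.congr_deriv ?_
      rw [hgd s θ]
      have e : s ^ (-γ - 1) = s ^ (-γ) / s := by
        rw [Real.rpow_sub hs0, Real.rpow_one]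
      rw [e]
      field_simp
      ring
    have hint2 : IntervalIntegrable (fun s => g s θ * s ^ (-γ)) volume r 1 := by
      apply ContinuousOn.intervalIntegrable
      rw [Set.uIcc_of_le hr1.le]
      exact (hg_contOn θ).mul (hrpowC _)
    have h4 := intervalIntegral.integral_eq_sub_of_hasDerivAt hderiv hint2
    rw [h4, Real.one_rpow, mul_one]
    ring
  -- pointwise bound
  have hpt : ∀ θ, (w r θ)^2 * r ^ (-(2*γ)) ≤
      2 * (w 1 θ)^2 + 2 * |Real.log r| * (∫ s in r..1, (g s θ)^2 * s ^ (1 - 2*γ)) := by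
    intro θ
    have hcs := cs_step hr0 hr1 γ (hg_contOn θ)
    have hftc := hFTC θ
    have hsq : ((w r θ) * r ^ (-γ))^2 = (w r θ)^2 * r ^ (-(2*γ)) := by
      rw [mul_pow, ← Real.rpow_natCast (r ^ (-γ)) 2, ← Real.rpow_mul hr0.le,
        show (-γ) * ((2:ℕ):ℝ) = -(2*γ) by push_cast; ring]
    rw [← hsq, hftc]
    nlinarith [sq_nonneg (w 1 θ + ∫ s in r..1, g s θ * s ^ (-γ)), hcs,
      sq_nonneg (w 1 θ - ∫ s in r..1, g s θ * s ^ (-γ))]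
  -- the parametric integrand with max-trick
  set q : EuclideanSpace ℝ (Fin N) → ℝ → ℝ := fun θ s => (g (max s r) θ)^2 * (max s r) ^ (1 - 2*γ) with hq
  have hmax_pos : ∀ s : ℝ, 0 < max s r := fun s => lt_of_lt_of_le hr0 (le_max_right s r)
  have hq_cont : Continuous (Function.uncurry q) := by
    have ho : ContinuousOn (fun p : ℝ × EuclideanSpace ℝ (Fin N) => (g p.1 p.2)^2 * p.1 ^ (1 - 2*γ))
        {p : ℝ × EuclideanSpace ℝ (Fin N) | p.1 ≠ 0} := by
      apply ContinuousOn.mul (hG_contOn.pow 2)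
      exact continuous_fst.continuousOn.rpow_const fun p hp => Or.inl hp
    have hm : Continuous (fun z : EuclideanSpace ℝ (Fin N) × ℝ => ((max z.2 r, z.1) : ℝ × EuclideanSpace ℝ (Fin N))) :=
      (continuous_snd.max continuous_const).prodMk continuous_fst
    have : Continuous ((fun p : ℝ × EuclideanSpace ℝ (Fin N) => (g p.1 p.2)^2 * p.1 ^ (1 - 2*γ)) ∘
        (fun z : EuclideanSpace ℝ (Fin N) × ℝ => ((max z.2 r, z.1) : ℝ × EuclideanSpace ℝ (Fin N)))) :=
      ho.comp_continuous hm fun z => ne_of_gt (hmax_pos z.2)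
    exact this
  set F : EuclideanSpace ℝ (Fin N) → ℝ := fun θ => ∫ s in r..1, q θ s with hF
  have hJeq : ∀ θ, (∫ s in r..1, (g s θ)^2 * s ^ (1 - 2*γ)) = F θ := by
    intro θ
    apply intervalIntegral.integral_congr
    intro s hs
    rw [Set.uIcc_of_le hr1.le] at hs
    simp only [hq]
    rw [max_eq_left hs.1]
  have hFcont : Continuous F :=
    intervalIntegral.continuous_parametric_intervalIntegral_of_continuous' hq_cont r 1
  -- integrability over the sphere
  have hcont_int : ∀ f : EuclideanSpace ℝ (Fin N) → ℝ, Continuous f → Integrable f (μ.restrict Sph) := by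
    intro f hf
    obtain ⟨M, hM⟩ := (isCompact_sphere (0:EuclideanSpace ℝ (Fin N)) 1).exists_bound_of_continuousOn hf.continuousOn
    refine Integrable.mono' (integrable_const M) hf.aestronglyMeasurable.restrict ?_
    rw [ae_restrict_iff' (isClosed_sphere.measurableSet)]
    exact ae_of_all _ hM
  have hwr_cont : Continuous (fun θ : EuclideanSpace ℝ (Fin N) => (w r θ)^2 * r ^ (-(2*γ))) := by
    have : Continuous (fun θ : EuclideanSpace ℝ (Fin N) => w r θ) := hWc.comp (continuous_const.prodMk continuous_id)
    exact (this.pow 2).mul continuous_const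
  have hw1_cont : Continuous (fun θ : EuclideanSpace ℝ (Fin N) => (w 1 θ)^2) := by
    have : Continuous (fun θ : EuclideanSpace ℝ (Fin N) => w 1 θ) := hWc.comp (continuous_const.prodMk continuous_id)
    exact this.pow 2
  have hwr_int := hcont_int _ hwr_cont
  have hw1_int := hcont_int _ hw1_cont
  have hF_int := hcont_int F hFcont
  -- main monotone step
  have hmono : ∫ θ in Sph, (w r θ)^2 * r ^ (-(2*γ)) ∂μ ≤
      ∫ θ in Sph, (2 * (w 1 θ)^2 + 2 * |Real.log r| * F θ) ∂μ := by
    apply integral_mono hwr_int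
    · exact (hw1_int.const_mul 2).add (hF_int.const_mul _)
    · intro θ
      have := hpt θ
      rwa [hJeq θ] at this
  -- Fubini bound : ∫ F ≤ C₂ / 2
  have hswap : ∫ θ in Sph, F θ ∂μ =
      ∫ s in Ioc r 1, (∫ θ in Sph, q θ s ∂μ) := by
    have h5 : ∀ θ, F θ = ∫ s in Ioc r 1, q θ s := by
      intro θ
      rw [hF]
      exact intervalIntegral.integral_of_le hr1.le
    rw [integral_congr_ae (ae_of_all _ h5)]
    apply MeasureTheory.integral_integral_swap
    -- integrability on product
    obtain ⟨M, hM⟩ := ((isCompact_sphere (0:EuclideanSpace ℝ (Fin N)) 1).prod isCompact_Icc).exists_bound_of_continuousOn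
      hq_cont.continuousOn
    apply Integrable.mono' (integrable_const M) hq_cont.aestronglyMeasurable
    rw [Measure.ae_prod_iff_ae_ae
      ((isClosed_le hq_cont.norm continuous_const).measurableSet)]
    refine (ae_restrict_mem isClosed_sphere.measurableSet).mono fun θ hθ => ?_
    refine (ae_restrict_mem measurableSet_Ioc).mono fun s hs => ?_
    exact hM (θ, s) ⟨hθ, Ioc_subset_Icc_self hs⟩
  -- inner integral simplification and comparison with hint
  have hXnn : ∀ s : ℝ, 0 ≤ ∫ θ in Sph, (g s θ)^2 ∂μ :=
    fun s => integral_nonneg fun θ => sq_nonneg _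
  have hinner : ∫ s in Ioc r 1, (∫ θ in Sph, q θ s ∂μ) =
      ∫ s in Ioc r 1, (∫ θ in Sph, (g s θ)^2 ∂μ) * s ^ (1 - 2*γ) := by
    apply setIntegral_congr_fun measurableSet_Ioc
    intro s hs
    simp only [hq]
    rw [max_eq_left hs.1.le]
    exact integral_mul_const _ _
  have hIoo : ∫ s in Ioc r 1, (∫ θ in Sph, (g s θ)^2 ∂μ) * s ^ (1 - 2*γ) =
      ∫ s in Ioo r 1, (∫ θ in Sph, (g s θ)^2 ∂μ) * s ^ (1 - 2*γ) :=
    integral_Ioc_eq_integral_Ioo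
  have hhalf : ∫ s in Ioo r 1, (∫ θ in Sph, (g s θ)^2 ∂μ) * s ^ (1 - 2*γ) =
      (1/2) * ∫ s in Ioo r 1, (2 / s ^ (2*γ - 1)) * ∫ θ in Sph, (g s θ)^2 ∂μ := by
    rw [← MeasureTheory.integral_const_mul]
    apply setIntegral_congr_fun measurableSet_Ioo
    intro s hs
    have hs0 : (0:ℝ) < s := lt_trans hr0 hs.1
    have hrw : 2 / s ^ (2*γ - 1) = 2 * s ^ (1 - 2*γ) := by
      rw [div_eq_mul_inv, ← Real.rpow_neg hs0.le, show -(2*γ-1) = 1 - 2*γ by ring]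
    show (∫ θ in Sph, (g s θ)^2 ∂μ) * s ^ (1 - 2*γ) =
      1/2 * (2 / s ^ (2*γ - 1) * ∫ θ in Sph, (g s θ)^2 ∂μ)
    rw [hrw]
    ring
  have hmonoset : ∫ s in Ioo r 1, (2 / s ^ (2*γ - 1)) * ∫ θ in Sph, (g s θ)^2 ∂μ ≤
      ∫ s in Ioo (0:ℝ) 1, (2 / s ^ (2*γ - 1)) * ∫ θ in Sph, (g s θ)^2 ∂μ := by
    apply setIntegral_mono_set hint
    · exact (ae_restrict_iff' measurableSet_Ioo).2 (ae_of_all _ fun s hs =>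
        mul_nonneg (div_nonneg (by norm_num) (Real.rpow_nonneg hs.1.le _)) (hXnn s))
    · exact Filter.Eventually.of_forall fun s hs => ⟨lt_trans hr0 hs.1, hs.2⟩
  have hJle : ∫ θ in Sph, F θ ∂μ ≤ C₂ / 2 := by
    rw [hswap, hinner, hIoo, hhalf]
    calc (1/2) * ∫ s in Ioo r 1, (2 / s ^ (2*γ - 1)) * ∫ θ in Sph, (g s θ)^2 ∂μ
        ≤ (1/2) * ∫ s in Ioo (0:ℝ) 1, (2 / s ^ (2*γ - 1)) * ∫ θ in Sph, (g s θ)^2 ∂μ := by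
          linarith [hmonoset]
      _ ≤ (1/2) * C₂ := by linarith [hbound]
      _ = C₂ / 2 := by ring
  -- final assembly
  have hLHS : (∫ θ in Sph, (w r θ)^2 ∂μ) / r ^ (2*γ) =
      ∫ θ in Sph, (w r θ)^2 * r ^ (-(2*γ)) ∂μ := by
    rw [MeasureTheory.integral_mul_const, Real.rpow_neg hr0.le, div_eq_mul_inv]
  have hsplit : ∫ θ in Sph, (2 * (w 1 θ)^2 + 2 * |Real.log r| * F θ) ∂μ =
      2 * (∫ θ in Sph, (w 1 θ)^2 ∂μ) + 2 * |Real.log r| * ∫ θ in Sph, F θ ∂μ := by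
    rw [integral_add (hw1_int.const_mul 2) (hF_int.const_mul _), MeasureTheory.integral_const_mul,
      MeasureTheory.integral_const_mul]
  have hF_nonneg : 0 ≤ ∫ θ in Sph, F θ ∂μ := by
    apply MeasureTheory.integral_nonneg
    intro θ
    have : (0:ℝ) ≤ ∫ s in r..1, q θ s := by
      apply intervalIntegral.integral_nonneg hr1.le
      intro s hs
      exact mul_nonneg (sq_nonneg _) (Real.rpow_nonneg (hmax_pos s).le _)
    exact this
  calc (∫ θ in Sph, (w r θ)^2 ∂μ) / r ^ (2*γ)
      = ∫ θ in Sph, (w r θ)^2 * r ^ (-(2*γ)) ∂μ := hLHS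
    _ ≤ 2 * (∫ θ in Sph, (w 1 θ)^2 ∂μ) + 2 * |Real.log r| * ∫ θ in Sph, F θ ∂μ := by
        rw [← hsplit]; exact hmono
    _ ≤ 2 * (∫ θ in Sph, (w 1 θ)^2 ∂μ) + 2 * |Real.log r| * (C₂ / 2) := by
        have := mul_le_mul_of_nonneg_left hJle (by positivity : (0:ℝ) ≤ 2 * |Real.log r|)
        linarith
    _ ≤ 2 * (∫ θ in Sph, (w 1 θ)^2 ∂μ) + 2 * |Real.log r| * C₂ := by
        have h9 : |Real.log r| * C₂ ≥ 0 := mul_nonneg hlog0 hC₂0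
        nlinarith [mul_nonneg hlog0 hC₂0]
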